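/- For any k-uniform hypergraph G on vertex set [n] and any integer 0 ≤ ℓ ≤ k, the sum over all ℓ-element subsets H of [n] of d(H)² is at most (C(k,ℓ)·C(k-1,ℓ)/C(n-1,ℓ))·|E(G)|² + C(k-1,ℓ-1)·C(n-ℓ-1,k-ℓ)·|E(G)|, where d(H) denotes the number of edges of G containing H. -/

import Mathlib

open Finset

variable {α : Type*} [DecidableEq α]

/-- number of k-subsets of V containing a fixed S ⊆ V -/
lemma count_supersets (V S : Finset α) (hS : S ⊆ V) (k : ℕ) (hk : S.card ≤ k) :
    ((V.powersetCard k).filter fun E => S ⊆ E).card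
      = (V.card - S.card).choose (k - S.card) := by
  rw [show V.card - S.card = (V \ S).card from (card_sdiff_of_subset hS).symm, ← card_powersetCard (k - S.card) (V \ S)]
  apply card_bij' (fun E _ => E \ S) (fun T _ => T ∪ S)
  · intro E hE
    simp only [mem_filter, mem_powersetCard] at hE ⊢
    refine ⟨sdiff_subset_sdiff hE.1.1 le_rfl, ?_⟩
    rw [card_sdiff_of_subset hE.2, hE.1.2]
  · intro T hT
    simp only [mem_filter, mem_powersetCard] at hT ⊢
    have hd : Disjoint T S := disjoint_of_subset_left hT.1 sdiff_disjoint
    constructor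
    · constructor
      · exact union_subset (hT.1.trans sdiff_subset) hS
      · rw [card_union_of_disjoint hd, hT.2, Nat.sub_add_cancel hk]
    · exact subset_union_right
  · intro E hE
    simp only [mem_filter, mem_powersetCard] at hE
    exact sdiff_union_of_subset hE.2
  · intro T hT
    simp only [mem_powersetCard] at hT
    have hd : Disjoint T S := disjoint_of_subset_left hT.1 sdiff_disjoint
    exact union_sdiff_cancel_right hd

lemma cnt_pair (V : Finset α) (k : ℕ) (hk : 2 ≤ k) {v u : α} (hv : v ∈ V) (hu : u ∈ V) :
    (((V.powersetCard k).filter fun E => v ∈ E ∧ u ∈ E).card : ℕ)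
      = if v = u then (V.card - 1).choose (k - 1) else (V.card - 2).choose (k - 2) := by
  split_ifs with h
  · subst h
    have := count_supersets V {v} (by simpa using hv) k (by simpa using hk.trans' one_le_two)
    simp only [card_singleton] at this
    rw [← this]
    congr 1
    apply filter_congr
    intro E _
    simp
  · have hcard : ({v, u} : Finset α).card = 2 := card_pair h
    have hsub : ({v, u} : Finset α) ⊆ V := by
      intro x hx; simp only [mem_insert, mem_singleton] at hx
      rcases hx with rfl | rfl <;> assumption
    have := count_supersets V {v, u} hsub k (by rw [hcard]; exact hk)
    rw [hcard] at this
    rw [← this]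
    congr 1
    apply filter_congr
    intro E _
    simp [insert_subset_iff]

lemma gram_ksets (V : Finset α) (k : ℕ) (hk : 2 ≤ k) (hkV : k ≤ V.card) (w : α → ℚ) :
    ∑ E ∈ V.powersetCard k, (∑ v ∈ E, w v) ^ 2
      = ((V.card - 2).choose (k - 1) : ℚ) * ∑ v ∈ V, w v ^ 2
        + ((V.card - 2).choose (k - 2) : ℚ) * (∑ v ∈ V, w v) ^ 2 := by
  have step1 : ∑ E ∈ V.powersetCard k, (∑ v ∈ E, w v) ^ 2
      = ∑ v ∈ V, ∑ u ∈ V, w v * w u *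
          ((((V.powersetCard k).filter fun E => v ∈ E ∧ u ∈ E).card : ℕ) : ℚ) := by
    calc ∑ E ∈ V.powersetCard k, (∑ v ∈ E, w v) ^ 2
        = ∑ E ∈ V.powersetCard k, ∑ v ∈ V, ∑ u ∈ V,
            (if v ∈ E then w v else 0) * (if u ∈ E then w u else 0) := by
          refine sum_congr rfl fun E hE => ?_
          rw [← Finset.sum_mul_sum]
          rw [Finset.sum_ite_mem, inter_eq_right.mpr (mem_powersetCard.1 hE).1, sq]
      _ = ∑ v ∈ V, ∑ u ∈ V, ∑ E ∈ V.powersetCard k,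
            (if v ∈ E then w v else 0) * (if u ∈ E then w u else 0) := by
          rw [Finset.sum_comm]
          exact sum_congr rfl fun _ _ => Finset.sum_comm
      _ = _ := by
          refine sum_congr rfl fun v hv => sum_congr rfl fun u hu => ?_
          have : ∀ E : Finset α, (if v ∈ E then w v else 0) * (if u ∈ E then w u else 0)
              = if v ∈ E ∧ u ∈ E then w v * w u else 0 := by
            intro E; split_ifs with h1 h2 h3 <;> simp_all
          simp_rw [this]
          rw [← Finset.sum_filter, Finset.sum_const, nsmul_eq_mul, mul_comm]
  rw [step1]
  have step2 : ∀ v ∈ V, ∑ u ∈ V, w v * w u *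
        ((((V.powersetCard k).filter fun E => v ∈ E ∧ u ∈ E).card : ℕ) : ℚ)
      = ((V.card - 1).choose (k - 1) : ℚ) * w v ^ 2
        + ((V.card - 2).choose (k - 2) : ℚ) * (w v * (∑ u ∈ V, w u) - w v ^ 2) := by
    intro v hv
    rw [← Finset.add_sum_erase _ _ hv]
    rw [cnt_pair V k hk hv hv, if_pos rfl]
    have : ∀ u ∈ V.erase v, w v * w u *
          ((((V.powersetCard k).filter fun E => v ∈ E ∧ u ∈ E).card : ℕ) : ℚ)
        = ((V.card - 2).choose (k - 2) : ℚ) * (w v * w u) := by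
      intro u hu
      rw [cnt_pair V k hk hv (mem_of_mem_erase hu), if_neg (Ne.symm (ne_of_mem_erase hu))]
      ring
    rw [sum_congr rfl this, ← Finset.mul_sum]
    have h2 : ∑ u ∈ V.erase v, w v * w u = w v * ∑ u ∈ V, w u - w v * w v := by
      rw [← Finset.mul_sum, ← Finset.add_sum_erase _ w hv]; ring
    rw [h2]
    ring
  rw [sum_congr rfl step2, Finset.sum_add_distrib]
  simp_rw [← Finset.mul_sum]
  have expand : ∑ v ∈ V, (w v * ∑ u ∈ V, w u - w v ^ 2)
      = (∑ v ∈ V, w v) ^ 2 - ∑ v ∈ V, w v ^ 2 := by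
    rw [Finset.sum_sub_distrib, ← Finset.sum_mul, sq]
  rw [expand]
  have pascal : (V.card - 1).choose (k - 1)
      = (V.card - 2).choose (k - 2) + (V.card - 2).choose (k - 1) := by
    have h2 : 2 ≤ V.card := hk.trans hkV
    have key : ∀ n kk : ℕ, 2 ≤ kk → 2 ≤ n →
        (n - 1).choose (kk - 1) = (n - 2).choose (kk - 2) + (n - 2).choose (kk - 1) := by
      intro n kk hkk hn
      obtain ⟨n', rfl⟩ : ∃ n', n = n' + 2 := ⟨n - 2, by omega⟩
      obtain ⟨k', rfl⟩ : ∃ k', kk = k' + 2 := ⟨kk - 2, by omega⟩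
      simp only [Nat.add_sub_cancel, show n' + 2 - 1 = n' + 1 from rfl,
        show k' + 2 - 1 = k' + 1 from rfl]
      rw [Nat.choose_succ_succ]
    exact key _ _ hk h2
  rw [pascal]
  push_cast
  ring

lemma sum_deg_mul (G : Finset (Finset α)) (V : Finset α) (hG : ∀ E ∈ G, E ⊆ V) (f : α → ℚ) :
    ∑ E ∈ G, ∑ v ∈ E, f v = ∑ v ∈ V, ((G.filter fun E => v ∈ E).card : ℚ) * f v := by
  calc ∑ E ∈ G, ∑ v ∈ E, f v
      = ∑ E ∈ G, ∑ v ∈ V, if v ∈ E then f v else 0 := by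
        refine sum_congr rfl fun E hE => ?_
        rw [Finset.sum_ite_mem, inter_eq_right.mpr (hG E hE)]
    _ = ∑ v ∈ V, ∑ E ∈ G, if v ∈ E then f v else 0 := Finset.sum_comm
    _ = _ := by
        refine sum_congr rfl fun v _ => ?_
        rw [← Finset.sum_filter, Finset.sum_const, nsmul_eq_mul]

lemma handshake (G : Finset (Finset α)) (V : Finset α) (k : ℕ)
    (hG : ∀ E ∈ G, E.card = k ∧ E ⊆ V) :
    ∑ v ∈ V, ((G.filter fun E => v ∈ E).card : ℚ) = k * G.card := by
  have := sum_deg_mul G V (fun E hE => (hG E hE).2) (fun _ => 1)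
  simp only [mul_one] at this
  rw [← this]
  rw [Finset.sum_congr rfl fun E hE => by
    rw [Finset.sum_const, nsmul_eq_mul, mul_one, (hG E hE).1]]
  rw [Finset.sum_const, nsmul_eq_mul, mul_comm]

/-- Bey's inequality for ℓ = 1, main case. -/
lemma bey_one (V : Finset α) (k : ℕ) (hk : 2 ≤ k) (hkV : k + 1 ≤ V.card)
    (G : Finset (Finset α)) (hG : ∀ E ∈ G, E.card = k ∧ E ⊆ V) :
    ∑ v ∈ V, ((G.filter fun E => v ∈ E).card : ℚ) ^ 2 ≤
      (k : ℚ) * ((k : ℚ) - 1) / ((V.card : ℚ) - 1) * (G.card : ℚ) ^ 2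
        + ((V.card - 2).choose (k - 1) : ℚ) * (G.card : ℚ) := by
  set n : ℕ := V.card with hn
  set m : ℚ := (G.card : ℚ) with hm
  set d : α → ℚ := fun v => ((G.filter fun E => v ∈ E).card : ℚ) with hd
  set A : ℚ := ((n - 2).choose (k - 1) : ℚ) with hA
  set B : ℚ := (((n - 2).choose (k - 2) : ℕ) : ℚ) with hB
  have hkn : k ≤ n := by omega
  have hn2 : 2 ≤ n := by omega
  have hkn : k ≤ n := by omega
  have hn2 : 2 ≤ n := by omega
  have hnn1 : (0:ℚ) < (n : ℚ) - 1 := by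
    have : (2:ℚ) ≤ (n:ℚ) := by exact_mod_cast hn2
    linarith
  have hkk : (0:ℚ) < (k:ℚ) := by positivity
  have hApos : (0:ℚ) < A := by
    rw [hA]
    exact_mod_cast Nat.choose_pos (by omega : k - 1 ≤ n - 2)
  set γ : ℚ := ((k:ℚ) - 1) / ((k:ℚ) * ((n:ℚ) - 1)) with hγ
  set w : α → ℚ := fun v => d v - γ * ((k:ℚ) * m) with hw
  set D2 : ℚ := ∑ v ∈ V, d v ^ 2 with hD2
  have hS : ∑ v ∈ V, d v = (k:ℚ) * m := handshake G V k hG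
  have GsubPC : G ⊆ V.powersetCard k := fun E hE =>
    mem_powersetCard.2 ⟨(hG E hE).2, (hG E hE).1⟩
  have key2 : ∑ E ∈ G, ∑ v ∈ E, w v = D2 - γ * ((k:ℚ)*m) * ((k:ℚ)*m) := by
    rw [sum_deg_mul G V (fun E hE => (hG E hE).2) w]
    have h : ∀ v ∈ V, d v * w v = d v ^ 2 - γ * ((k:ℚ)*m) * d v := by
      intro v _; rw [hw]; ring
    rw [sum_congr rfl h, Finset.sum_sub_distrib, ← Finset.mul_sum, hS, ← hD2]
  have W1 : ∑ v ∈ V, w v = (k:ℚ)*m - (n:ℚ) * (γ * ((k:ℚ)*m)) := by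
    rw [hw]
    rw [Finset.sum_sub_distrib, hS, Finset.sum_const, nsmul_eq_mul, hn]
  have W2 : ∑ v ∈ V, w v ^ 2
      = D2 - 2*γ*((k:ℚ)*m)*((k:ℚ)*m) + (n:ℚ)*(γ*((k:ℚ)*m))^2 := by
    have h : ∀ v ∈ V, w v ^ 2 = d v ^ 2 - 2*γ*((k:ℚ)*m)* d v + (γ*((k:ℚ)*m))^2 := by
      intro v _; rw [hw]; ring
    rw [sum_congr rfl h, Finset.sum_add_distrib, Finset.sum_sub_distrib,
      ← Finset.mul_sum, hS, Finset.sum_const, nsmul_eq_mul, ← hD2, hn]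
  have gram := gram_ksets V k hk hkn w
  rw [← hn, ← hA, ← hB] at gram
  have sumx : ∑ E ∈ V.powersetCard k, (if E ∈ G then (1:ℚ) else 0) = m := by
    rw [Finset.sum_ite_mem, inter_eq_right.mpr GsubPC, Finset.sum_const, nsmul_eq_mul, mul_one, hm]
  have sumxt : ∑ E ∈ V.powersetCard k, (if E ∈ G then (∑ v ∈ E, w v) else 0)
      = ∑ E ∈ G, ∑ v ∈ E, w v := by
    rw [Finset.sum_ite_mem, inter_eq_right.mpr GsubPC]
  have SOS : (0:ℚ) ≤ ∑ E ∈ V.powersetCard k,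
      (A * (if E ∈ G then (1:ℚ) else 0) - ∑ v ∈ E, w v)^2 :=
    Finset.sum_nonneg fun E _ => sq_nonneg _
  have expand : ∑ E ∈ V.powersetCard k,
        (A * (if E ∈ G then (1:ℚ) else 0) - ∑ v ∈ E, w v)^2
      = A^2 * m - 2*A*(D2 - γ * ((k:ℚ)*m) * ((k:ℚ)*m))
        + (A * ∑ v ∈ V, w v ^ 2 + B * (∑ v ∈ V, w v)^2) := by
    have pe : ∀ E ∈ V.powersetCard k,
        (A * (if E ∈ G then (1:ℚ) else 0) - ∑ v ∈ E, w v)^2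
        = A^2 * (if E ∈ G then (1:ℚ) else 0)
          - 2*A*(if E ∈ G then (∑ v ∈ E, w v) else 0) + (∑ v ∈ E, w v)^2 := by
      intro E _
      split_ifs with h <;> ring
    rw [sum_congr rfl pe, Finset.sum_add_distrib, Finset.sum_sub_distrib,
      ← Finset.mul_sum, ← Finset.mul_sum, sumx, sumxt, key2, gram]
  rw [expand, W1, W2] at SOS
  have hβα : B * ((n:ℚ) - (k:ℚ)) = ((k:ℚ) - 1) * A := by
    have hnat : (n-2).choose (k-2) * (n-k) = (k-1) * ((n-2).choose (k-1)) := by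
      have h0 := Nat.choose_succ_right_eq (n-2) (k-2)
      have hi1 : k - 2 + 1 = k - 1 := by omega
      have hi2 : n - 2 - (k - 2) = n - k := by omega
      rw [hi1, hi2] at h0
      rw [← h0]; ring
    rw [hA, hB]
    have c1 : ((n:ℚ) - (k:ℚ)) = ((n - k : ℕ) : ℚ) := by
      push_cast [Nat.cast_sub hkn]; ring
    have c2 : ((k:ℚ) - 1) = ((k - 1 : ℕ) : ℚ) := by
      push_cast [Nat.cast_sub (by omega : 1 ≤ k)]; ring
    rw [c1, c2, ← Nat.cast_mul, ← Nat.cast_mul]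
    exact_mod_cast congrArg (Nat.cast (R := ℚ)) hnat
  have key : A * D2 ≤ A * ((k:ℚ) * ((k:ℚ) - 1) / ((n:ℚ) - 1) * m^2 + A * m) := by
    have idq : (k:ℚ)^2 * (A*(n:ℚ)*γ^2 + B*(1 - (n:ℚ)*γ)^2)
        = A * (k:ℚ) * ((k:ℚ)-1) / ((n:ℚ)-1) := by
      rw [hγ]
      have e1 : 1 - (n:ℚ) * (((k:ℚ) - 1) / ((k:ℚ) * ((n:ℚ) - 1)))
          = ((n:ℚ)-(k:ℚ)) / ((k:ℚ) * ((n:ℚ)-1)) := by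
        field_simp; ring
      rw [e1, div_pow, div_pow]
      field_simp
      linear_combination ((n:ℚ)-(k:ℚ)) * hβα
    have e2 : A ^ 2 * m - 2 * A * (D2 - γ * ((k:ℚ) * m) * ((k:ℚ) * m)) +
        (A * (D2 - 2 * γ * ((k:ℚ) * m) * ((k:ℚ) * m) + (n:ℚ) * (γ * ((k:ℚ) * m)) ^ 2)
          + B * ((k:ℚ) * m - (n:ℚ) * (γ * ((k:ℚ) * m))) ^ 2)
        = A^2*m - A*D2 + m^2 * ((k:ℚ)^2 * (A*(n:ℚ)*γ^2 + B*(1 - (n:ℚ)*γ)^2)) := by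
      ring
    rw [e2, idq] at SOS
    have e3 : A * ((k:ℚ) * ((k:ℚ) - 1) / ((n:ℚ) - 1) * m^2 + A * m)
        = A^2*m + m^2 * (A * (k:ℚ) * ((k:ℚ)-1) / ((n:ℚ)-1)) := by
      ring
    rw [e3]
    linarith [SOS]
  have fin := (mul_le_mul_iff_right₀ hApos).mp key
  calc D2 ≤ (k:ℚ) * ((k:ℚ) - 1) / ((n:ℚ) - 1) * m^2 + A * m := fin
    _ = _ := by rw [hA]

lemma reindex_links (V : Finset α) (ℓ : ℕ) (hℓ : 1 ≤ ℓ) (f : Finset α → ℚ) :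
    (ℓ:ℚ) * ∑ H ∈ V.powersetCard ℓ, f H
      = ∑ x ∈ V, ∑ H' ∈ (V.erase x).powersetCard (ℓ-1), f (insert x H') := by
  have step1 : (ℓ:ℚ) * ∑ H ∈ V.powersetCard ℓ, f H
      = ∑ H ∈ V.powersetCard ℓ, ∑ x ∈ V, (if x ∈ H then f H else 0) := by
    rw [Finset.mul_sum]
    refine sum_congr rfl fun H hH => ?_
    obtain ⟨hHV, hcard⟩ := mem_powersetCard.1 hH
    rw [Finset.sum_ite_mem, inter_eq_right.mpr hHV, Finset.sum_const, hcard, nsmul_eq_mul]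
  rw [step1, Finset.sum_comm]
  refine sum_congr rfl fun x hx => ?_
  rw [← Finset.sum_filter]
  refine Finset.sum_bij' (fun H _ => H.erase x) (fun H' _ => insert x H') ?_ ?_ ?_ ?_ ?_
  · intro H hH
    simp only [mem_filter, mem_powersetCard] at hH ⊢
    exact ⟨erase_subset_erase x hH.1.1, by rw [card_erase_of_mem hH.2, hH.1.2]⟩
  · intro H' hH'
    simp only [mem_filter, mem_powersetCard] at hH' ⊢
    have hx' : x ∉ H' := fun hc => (mem_erase.1 (hH'.1 hc)).1 rfl
    refine ⟨⟨insert_subset hx (hH'.1.trans (erase_subset x V)), ?_⟩, mem_insert_self x H'⟩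
    rw [card_insert_of_notMem hx', hH'.2]
    omega
  · intro H hH
    simp only [mem_filter] at hH
    exact insert_erase hH.2
  · intro H' hH'
    simp only [mem_powersetCard] at hH'
    exact erase_insert fun hc => (mem_erase.1 (hH'.1 hc)).1 rfl
  · intro H hH
    simp only [mem_filter] at hH
    rw [insert_erase hH.2]

/-- the link of `G` at `x` -/
noncomputable def link (G : Finset (Finset α)) (x : α) : Finset (Finset α) :=
  (G.filter fun E => x ∈ E).image fun E => E.erase x

lemma link_card (G : Finset (Finset α)) (x : α) :
    (link G x).card = (G.filter fun E => x ∈ E).card := by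
  apply card_image_of_injOn
  intro E hE F hF hEF
  simp only [coe_filter, Set.mem_setOf_eq] at hE hF
  dsimp only at hEF
  rw [← insert_erase hE.2, ← insert_erase hF.2, hEF]

lemma link_mem (G : Finset (Finset α)) (x : α) (V : Finset α) (k : ℕ)
    (hG : ∀ E ∈ G, E.card = k ∧ E ⊆ V) :
    ∀ E' ∈ link G x, E'.card = k - 1 ∧ E' ⊆ V.erase x := by
  intro E' hE'
  simp only [link, mem_image, mem_filter] at hE'
  obtain ⟨E, ⟨hEG, hxE⟩, rfl⟩ := hE'
  exact ⟨by rw [card_erase_of_mem hxE, (hG E hEG).1],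
    erase_subset_erase x (hG E hEG).2⟩

lemma link_codeg (G : Finset (Finset α)) (x : α) (H' : Finset α) (hx : x ∉ H') :
    ((link G x).filter fun E' => H' ⊆ E').card
      = (G.filter fun E => insert x H' ⊆ E).card := by
  rw [link]
  rw [Finset.filter_image]
  rw [Finset.card_image_of_injOn]
  · rw [Finset.filter_filter]
    congr 1
    apply filter_congr
    intro E _
    simp only [insert_subset_iff]
    constructor
    · rintro ⟨hxE, hsub⟩
      exact ⟨hxE, fun v hv => mem_of_mem_erase (hsub hv)⟩
    · rintro ⟨hxE, hsub⟩
      refine ⟨hxE, fun v hv => mem_erase.2 ⟨fun hc => hx (hc ▸ hv), hsub hv⟩⟩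
  · intro E hE F hF hEF
    simp only [coe_filter, Set.mem_setOf_eq, Finset.mem_filter] at hE hF
    dsimp only at hEF
    rw [← insert_erase hE.1.2, ← insert_erase hF.1.2, hEF]

theorem bey_aux : ∀ (ℓ k : ℕ), ℓ ≤ k → ∀ (V : Finset α) (G : Finset (Finset α)),
    (∀ E ∈ G, E.card = k ∧ E ⊆ V) →
    ∑ H ∈ V.powersetCard ℓ, ((G.filter fun E => H ⊆ E).card : ℚ) ^ 2 ≤
      ((k.choose ℓ * (k - 1).choose ℓ : ℕ) : ℚ) / (((V.card - 1).choose ℓ : ℕ) : ℚ)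
          * (G.card : ℚ) ^ 2
        + (((k - 1).choose (ℓ - 1) * (V.card - ℓ - 1).choose (k - ℓ) : ℕ) : ℚ)
          * (G.card : ℚ) := by
  intro ℓ
  induction ℓ using Nat.strong_induction_on with
  | _ ℓ IH =>
  intro k hℓk V G hG
  by_cases hnk : V.card < k
  · have hGe : G = ∅ := by
      rw [Finset.eq_empty_iff_forall_notMem]
      intro E hE
      have := card_le_card (hG E hE).2
      rw [(hG E hE).1] at this; omega
    subst hGe
    simp
  push_neg at hnk
  by_cases hkn : V.card = k
  · -- degenerate: V.card = k, so G ⊆ {V}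
    have hGV : ∀ E ∈ G, E = V := fun E hE =>
      Finset.eq_of_subset_of_card_le (hG E hE).2 (by rw [(hG E hE).1, hkn])
    rcases Finset.subset_singleton_iff.1
        (fun E hE => Finset.mem_singleton.2 (hGV E hE)) with h | h
    · subst h; simp
    · subst h
      have hLHS : ∑ H ∈ V.powersetCard ℓ,
          ((({V} : Finset (Finset α)).filter fun E => H ⊆ E).card : ℚ) ^ 2
          = (V.card.choose ℓ : ℚ) := by
        rw [← card_powersetCard ℓ V]
        rw [Finset.sum_congr rfl fun H hH => by
          rw [Finset.filter_singleton, if_pos (mem_powersetCard.1 hH).1,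
            Finset.card_singleton]]
        simp
      rw [hLHS]
      rcases eq_or_lt_of_le hℓk with rfl | hlt
      · -- ℓ = k = V.card
        have h2 : V.card - ℓ - 1 = 0 := by omega
        rw [h2, hkn]
        simp only [Nat.choose_self, Nat.choose_zero_right, Nat.sub_self, mul_one,
          Finset.card_singleton, Nat.cast_one, one_pow, mul_one]
        have h0 : (0:ℚ) ≤ ((1 * (ℓ - 1).choose ℓ : ℕ) : ℚ)
            / (((ℓ - 1).choose ℓ : ℕ) : ℚ) := by positivity
        linarith
      · -- ℓ < k = V.card
        have hc2 : (V.card - ℓ - 1).choose (k - ℓ) = 0 :=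
          Nat.choose_eq_zero_of_lt (by omega)
        have hden : ((k - 1).choose ℓ : ℚ) ≠ 0 := by
          have : 0 < (k-1).choose ℓ := Nat.choose_pos (by omega)
          exact_mod_cast this.ne'
        rw [hc2, hkn]
        simp only [mul_zero, Nat.cast_zero, zero_mul, add_zero, Finset.card_singleton,
          Nat.cast_one, one_pow, mul_one]
        rw [show k - 1 = k - 1 from rfl]
        push_cast
        rw [mul_div_assoc, div_self hden, mul_one]
  -- main case : k + 1 ≤ V.card
  have hkV : k + 1 ≤ V.card := by omega
  set n := V.card with hn
  have hm0 : (0:ℚ) ≤ (G.card : ℚ) := by positivity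
  rcases Nat.lt_or_ge ℓ 2 with hl2 | hl2
  · interval_cases ℓ
    · -- ℓ = 0
      rw [Finset.powersetCard_zero, Finset.sum_singleton]
      have he : (G.filter fun E => ∅ ⊆ E) = G :=
        Finset.filter_true_of_mem fun E _ => empty_subset E
      rw [he]
      simp only [Nat.choose_zero_right, Nat.mul_one, Nat.one_mul, Nat.sub_zero]
      have h1 : (0:ℚ) ≤ (((k-1).choose 0 : ℕ) : ℚ) * (((n - 1).choose k : ℕ) : ℚ)
          * (G.card : ℚ) := by positivity
      push_cast
      rw [div_one]
      push_cast at h1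
      linarith
    · -- ℓ = 1
      have hL : ∑ H ∈ V.powersetCard 1, ((G.filter fun E => H ⊆ E).card : ℚ) ^ 2
          = ∑ v ∈ V, ((G.filter fun E => v ∈ E).card : ℚ) ^ 2 := by
        rw [Finset.powersetCard_one, Finset.sum_map]
        refine sum_congr rfl fun v _ => ?_
        simp only [Function.Embedding.coeFn_mk]
        have : (G.filter fun E => {v} ⊆ E) = G.filter fun E => v ∈ E := by
          apply filter_congr
          intro E _
          simp
        rw [this]
      rw [hL]
      by_cases hk1 : k = 1
      · subst hk1
        have hle1 : ∀ v : α, (G.filter fun E => v ∈ E).card ≤ 1 := by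
          intro v
          apply Finset.card_le_one.2
          intro a ha b hb
          simp only [mem_filter] at ha hb
          obtain ⟨w, hw⟩ := Finset.card_eq_one.1 (hG a ha.1).1
          obtain ⟨u, hu⟩ := Finset.card_eq_one.1 (hG b hb.1).1
          rw [hw] at ha; rw [hu] at hb
          have hwv : v = w := Finset.mem_singleton.1 ha.2
          have huv : v = u := Finset.mem_singleton.1 hb.2
          rw [hw, hu, ← hwv, ← huv]
        have hsq : ∀ v ∈ V, ((G.filter fun E => v ∈ E).card : ℚ) ^ 2
            ≤ ((G.filter fun E => v ∈ E).card : ℚ) := by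
          intro v _
          have h1 : ((G.filter fun E => v ∈ E).card : ℚ) ≤ 1 := by
            exact_mod_cast hle1 v
          have h0 : (0:ℚ) ≤ ((G.filter fun E => v ∈ E).card : ℚ) := by positivity
          nlinarith
        have hsum := handshake G V 1 hG
        simp only [Nat.cast_one, one_mul] at hsum
        have hle : ∑ v ∈ V, ((G.filter fun E => v ∈ E).card : ℚ) ^ 2 ≤ (G.card : ℚ) := by
          calc ∑ v ∈ V, ((G.filter fun E => v ∈ E).card : ℚ) ^ 2
              ≤ ∑ v ∈ V, ((G.filter fun E => v ∈ E).card : ℚ) := Finset.sum_le_sum hsq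
            _ = (G.card : ℚ) := hsum
        have hz : (1:ℕ).choose 1 * ((1-1).choose 1) = 0 := rfl
        have ho : ((1:ℕ)-1).choose (1-1) * (n - 1 - 1).choose (1-1) = 1 := by simp
        rw [hz, ho]
        simpa using hle
      · have hk2 : 2 ≤ k := by omega
        have hb1 := bey_one V k hk2 (by omega) G hG
        have hi1 : n - 1 - 1 = n - 2 := by omega
        simp only [Nat.choose_one_right, Nat.choose_zero_right, one_mul, Nat.mul_one, hi1]
        have c1 : ((k * (k-1) : ℕ) : ℚ) = (k:ℚ) * ((k:ℚ) - 1) := by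
          push_cast [Nat.cast_sub (by omega : 1 ≤ k)]; ring
        have c2 : ((n - 1 : ℕ) : ℚ) = (n:ℚ) - 1 := by
          push_cast [Nat.cast_sub (by omega : 1 ≤ n)]; ring
        rw [c1, c2]
        rw [← hn] at hb1
        simpa using hb1
  · -- ℓ ≥ 2
    have hk2 : 2 ≤ k := le_trans hl2 hℓk
    have hl0 : (0:ℚ) < (ℓ:ℚ) := by exact_mod_cast (by omega : 0 < ℓ)
    have hn3 : 3 ≤ n := by omega
    have hn1 : (0:ℚ) < (n:ℚ) - 1 := by
      have : (3:ℚ) ≤ (n:ℚ) := by exact_mod_cast hn3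
      linarith
    have hq3pos : (0:ℚ) < (((n-2).choose (ℓ-1) : ℕ) : ℚ) := by
      exact_mod_cast Nat.choose_pos (by omega : ℓ - 1 ≤ n - 2)
    have hqnpos : (0:ℚ) < (((n-1).choose ℓ : ℕ) : ℚ) := by
      exact_mod_cast Nat.choose_pos (by omega : ℓ ≤ n - 1)
    -- reindexing to links
    have R := reindex_links V ℓ (by omega) (fun H => ((G.filter fun E => H ⊆ E).card : ℚ)^2)
    -- the per-vertex bound from the induction hypothesis
    have key : ∀ x ∈ V, ∑ H' ∈ (V.erase x).powersetCard (ℓ-1),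
        ((G.filter fun E => insert x H' ⊆ E).card : ℚ)^2
        ≤ (((k-1).choose (ℓ-1) * (k-2).choose (ℓ-1) : ℕ):ℚ) / (((n-2).choose (ℓ-1) : ℕ):ℚ)
            * ((G.filter fun E => x ∈ E).card : ℚ)^2
          + (((k-2).choose (ℓ-2) * (n-ℓ-1).choose (k-ℓ) : ℕ):ℚ)
            * ((G.filter fun E => x ∈ E).card : ℚ) := by
      intro x hx
      have hstep : ∀ H' ∈ (V.erase x).powersetCard (ℓ-1),
          ((G.filter fun E => insert x H' ⊆ E).card : ℚ)^2
          = (((link G x).filter fun E' => H' ⊆ E').card : ℚ)^2 := by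
        intro H' hH'
        rw [link_codeg G x H'
          (fun hc => (mem_erase.1 ((mem_powersetCard.1 hH').1 hc)).1 rfl)]
      rw [sum_congr rfl hstep]
      have hIH := IH (ℓ-1) (by omega) (k-1) (by omega) (V.erase x) (link G x)
        (link_mem G x V k hG)
      rw [card_erase_of_mem hx, link_card, ← hn] at hIH
      rw [show n - 1 - 1 = n - 2 from by omega, show k - 1 - 1 = k - 2 from by omega,
          show ℓ - 1 - 1 = ℓ - 2 from by omega,
          show n - 1 - (ℓ-1) - 1 = n - ℓ - 1 from by omega,
          show k - 1 - (ℓ-1) = k - ℓ from by omega] at hIH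
      exact hIH
    have hsum1 : ∑ x ∈ V, ((G.filter fun E => x ∈ E).card : ℚ) = (k:ℚ) * (G.card:ℚ) :=
      handshake G V k hG
    have hsum2 := bey_one V k hk2 (by omega) G hG
    rw [← hn] at hsum2
    have hA'pos : (0:ℚ) ≤ (((k-1).choose (ℓ-1) * (k-2).choose (ℓ-1) : ℕ):ℚ)
        / (((n-2).choose (ℓ-1) : ℕ):ℚ) := by positivity
    -- numeric identities
    have h1 : (k:ℚ) * (((k-1).choose (ℓ-1) : ℕ):ℚ) = (ℓ:ℚ) * ((k.choose ℓ : ℕ):ℚ) := by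
      have hnat := Nat.add_one_mul_choose_eq (k-1) (ℓ-1)
      rw [show k-1+1 = k from by omega, show ℓ-1+1 = ℓ from by omega] at hnat
      exact_mod_cast hnat.trans (Nat.mul_comm _ _)
    have h2 : ((k:ℚ) - 1) * (((k-2).choose (ℓ-1) : ℕ):ℚ)
        = (ℓ:ℚ) * (((k-1).choose ℓ : ℕ):ℚ) := by
      have hnat := Nat.add_one_mul_choose_eq (k-2) (ℓ-1)
      rw [show k-2+1 = k - 1 from by omega, show ℓ-1+1 = ℓ from by omega] at hnat
      have := hnat.trans (Nat.mul_comm _ _)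
      have hc : ((k - 1 : ℕ):ℚ) = (k:ℚ) - 1 := by
        push_cast [Nat.cast_sub (by omega : 1 ≤ k)]; ring
      rw [← hc]
      exact_mod_cast this
    have h3 : ((n:ℚ) - 1) * (((n-2).choose (ℓ-1) : ℕ):ℚ)
        = (ℓ:ℚ) * (((n-1).choose ℓ : ℕ):ℚ) := by
      have hnat := Nat.add_one_mul_choose_eq (n-2) (ℓ-1)
      rw [show n-2+1 = n - 1 from by omega, show ℓ-1+1 = ℓ from by omega] at hnat
      have := hnat.trans (Nat.mul_comm _ _)
      have hc : ((n - 1 : ℕ):ℚ) = (n:ℚ) - 1 := by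
        push_cast [Nat.cast_sub (by omega : 1 ≤ n)]; ring
      rw [← hc]
      exact_mod_cast this
    have h4 : (((n-2).choose (k-1) : ℕ):ℚ) * (((k-1).choose (ℓ-1) : ℕ):ℚ)
        = (((n-2).choose (ℓ-1) : ℕ):ℚ) * (((n-ℓ-1).choose (k-ℓ) : ℕ):ℚ) := by
      have hnat := Nat.choose_mul (n := n-2) (show ℓ-1 ≤ k-1 from by omega)
      rw [show n - 2 - (ℓ-1) = n - ℓ - 1 from by omega,
          show k - 1 - (ℓ-1) = k - ℓ from by omega] at hnat
      exact_mod_cast hnat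
    have h5 : ((ℓ:ℚ) - 1) * (((k-2).choose (ℓ-1) : ℕ):ℚ)
        = ((k:ℚ) - (ℓ:ℚ)) * (((k-2).choose (ℓ-2) : ℕ):ℚ) := by
      have hnat := Nat.choose_succ_right_eq (k-2) (ℓ-2)
      rw [show ℓ - 2 + 1 = ℓ - 1 from by omega,
          show k - 2 - (ℓ-2) = k - ℓ from by omega] at hnat
      have hc1 : ((ℓ - 1 : ℕ):ℚ) = (ℓ:ℚ) - 1 := by
        push_cast [Nat.cast_sub (by omega : 1 ≤ ℓ)]; ring
      have hc2 : ((k - ℓ : ℕ):ℚ) = (k:ℚ) - (ℓ:ℚ) := by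
        push_cast [Nat.cast_sub hℓk]; ring
      rw [← hc1, ← hc2]
      have hnat2 : (ℓ-1) * ((k-2).choose (ℓ-1)) = (k-ℓ) * ((k-2).choose (ℓ-2)) := by
        rw [Nat.mul_comm, hnat, Nat.mul_comm]
      exact_mod_cast hnat2
    have h6 : (((k-1).choose (ℓ-1) : ℕ):ℚ)
        = (((k-2).choose (ℓ-2) : ℕ):ℚ) + (((k-2).choose (ℓ-1) : ℕ):ℚ) := by
      have hnat := Nat.choose_succ_succ (k-2) (ℓ-2)
      rw [show (k-2).succ = k - 1 from by omega, show (ℓ-2).succ = ℓ - 1 from by omega] at hnat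
      exact_mod_cast hnat
    -- the two exact constant identities
    have eqquad : (((k-1).choose (ℓ-1) * (k-2).choose (ℓ-1) : ℕ):ℚ)
          / (((n-2).choose (ℓ-1) : ℕ):ℚ) * ((k:ℚ) * ((k:ℚ) - 1) / ((n:ℚ) - 1))
        = (ℓ:ℚ) * (((k.choose ℓ * (k - 1).choose ℓ : ℕ):ℚ) / (((n-1).choose ℓ : ℕ):ℚ)) := by
      have hne3 : (((n-2).choose (ℓ-1) : ℕ):ℚ) ≠ 0 := ne_of_gt hq3pos
      have hnen : (((n-1).choose ℓ : ℕ):ℚ) ≠ 0 := ne_of_gt hqnpos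
      have hne1 : (n:ℚ) - 1 ≠ 0 := ne_of_gt hn1
      push_cast
      field_simp
      linear_combination (((k:ℚ)-1) * (((k-2).choose (ℓ-1) : ℕ):ℚ) * (((n-1).choose ℓ : ℕ):ℚ)) * h1
        + ((ℓ:ℚ) * ((k.choose ℓ : ℕ):ℚ) * (((n-1).choose ℓ : ℕ):ℚ)) * h2
        - ((ℓ:ℚ) * ((k.choose ℓ : ℕ):ℚ) * (((k-1).choose ℓ : ℕ):ℚ)) * h3
    have eqlin : (((k-1).choose (ℓ-1) * (k-2).choose (ℓ-1) : ℕ):ℚ)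
          / (((n-2).choose (ℓ-1) : ℕ):ℚ) * (((n-2).choose (k-1) : ℕ):ℚ)
          + (((k-2).choose (ℓ-2) * (n-ℓ-1).choose (k-ℓ) : ℕ):ℚ) * (k:ℚ)
        = (ℓ:ℚ) * (((k-1).choose (ℓ-1) * (n-ℓ-1).choose (k-ℓ) : ℕ):ℚ) := by
      have hne3 : (((n-2).choose (ℓ-1) : ℕ):ℚ) ≠ 0 := ne_of_gt hq3pos
      push_cast
      field_simp
      linear_combination ((((k-2).choose (ℓ-1) : ℕ):ℚ)) * h4
        - ((((n-2).choose (ℓ-1) : ℕ):ℚ) * (((n-ℓ-1).choose (k-ℓ) : ℕ):ℚ)) * h5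
        - ((ℓ:ℚ) * (((n-2).choose (ℓ-1) : ℕ):ℚ) * (((n-ℓ-1).choose (k-ℓ) : ℕ):ℚ)) * h6
    -- assemble
    have main : (ℓ:ℚ) * ∑ H ∈ V.powersetCard ℓ, ((G.filter fun E => H ⊆ E).card : ℚ) ^ 2
        ≤ (ℓ:ℚ) * (((k.choose ℓ * (k - 1).choose ℓ : ℕ) : ℚ) / (((n - 1).choose ℓ : ℕ) : ℚ)
            * (G.card : ℚ) ^ 2
          + (((k - 1).choose (ℓ - 1) * (n - ℓ - 1).choose (k - ℓ) : ℕ) : ℚ) * (G.card : ℚ)) := by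
      calc (ℓ:ℚ) * ∑ H ∈ V.powersetCard ℓ, ((G.filter fun E => H ⊆ E).card : ℚ) ^ 2
          = ∑ x ∈ V, ∑ H' ∈ (V.erase x).powersetCard (ℓ-1),
              ((G.filter fun E => insert x H' ⊆ E).card : ℚ)^2 := R
        _ ≤ ∑ x ∈ V, ((((k-1).choose (ℓ-1) * (k-2).choose (ℓ-1) : ℕ):ℚ)
              / (((n-2).choose (ℓ-1) : ℕ):ℚ) * ((G.filter fun E => x ∈ E).card : ℚ)^2
            + (((k-2).choose (ℓ-2) * (n-ℓ-1).choose (k-ℓ) : ℕ):ℚ)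
              * ((G.filter fun E => x ∈ E).card : ℚ)) := Finset.sum_le_sum key
        _ = (((k-1).choose (ℓ-1) * (k-2).choose (ℓ-1) : ℕ):ℚ) / (((n-2).choose (ℓ-1) : ℕ):ℚ)
              * ∑ x ∈ V, ((G.filter fun E => x ∈ E).card : ℚ)^2
            + (((k-2).choose (ℓ-2) * (n-ℓ-1).choose (k-ℓ) : ℕ):ℚ)
              * ((k:ℚ) * (G.card:ℚ)) := by
            rw [Finset.sum_add_distrib, ← Finset.mul_sum, ← Finset.mul_sum, hsum1]
        _ ≤ (((k-1).choose (ℓ-1) * (k-2).choose (ℓ-1) : ℕ):ℚ) / (((n-2).choose (ℓ-1) : ℕ):ℚ)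
              * ((k:ℚ) * ((k:ℚ) - 1) / ((n:ℚ) - 1) * (G.card:ℚ)^2
                + (((n-2).choose (k-1) : ℕ):ℚ) * (G.card:ℚ))
            + (((k-2).choose (ℓ-2) * (n-ℓ-1).choose (k-ℓ) : ℕ):ℚ)
              * ((k:ℚ) * (G.card:ℚ)) := by
            have := mul_le_mul_of_nonneg_left hsum2 hA'pos
            linarith
        _ = ((((k-1).choose (ℓ-1) * (k-2).choose (ℓ-1) : ℕ):ℚ)
              / (((n-2).choose (ℓ-1) : ℕ):ℚ) * ((k:ℚ) * ((k:ℚ) - 1) / ((n:ℚ) - 1)))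
              * (G.card:ℚ)^2
            + ((((k-1).choose (ℓ-1) * (k-2).choose (ℓ-1) : ℕ):ℚ)
              / (((n-2).choose (ℓ-1) : ℕ):ℚ) * (((n-2).choose (k-1) : ℕ):ℚ)
              + (((k-2).choose (ℓ-2) * (n-ℓ-1).choose (k-ℓ) : ℕ):ℚ) * (k:ℚ)) * (G.card:ℚ) := by
            ring
        _ = _ := by rw [eqquad, eqlin]; ring
    exact le_of_mul_le_mul_left main hl0

/-- Bey's inequality: for a `k`-uniform hypergraph `G` on `n` vertices and `0 ≤ ℓ ≤ k`,
the sum over `ℓ`-sets `H` of `d(H)²` is at most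
`(C(k,ℓ)·C(k-1,ℓ)/C(n-1,ℓ))·|G|² + C(k-1,ℓ-1)·C(n-ℓ-1,k-ℓ)·|G|`. -/
theorem bey_inequality (n k ℓ : ℕ) (hℓ : ℓ ≤ k)
    (G : Finset (Finset (Fin n))) (hG : ∀ E ∈ G, E.card = k) :
    ∑ H ∈ Finset.univ.powersetCard ℓ,
        (((G.filter fun E => H ⊆ E).card : ℚ)) ^ 2 ≤
      ((k.choose ℓ * (k - 1).choose ℓ : ℕ) : ℚ) / (((n - 1).choose ℓ : ℕ) : ℚ)
          * (G.card : ℚ) ^ 2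
        + (((k - 1).choose (ℓ - 1) * (n - ℓ - 1).choose (k - ℓ) : ℕ) : ℚ) * (G.card : ℚ) := by
  have h := bey_aux ℓ k hℓ Finset.univ G (fun E hE => ⟨hG E hE, Finset.subset_univ E⟩)
  rwa [show (Finset.univ : Finset (Fin n)).card = n from by simp] at h
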